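/- Let m be a nonnegative integer, k = 4m+3, and let x, y, z be nonnegative integers less than 2^{n+1} with binary digits x_i, y_i, z_i, satisfying x ⊕ y ⊕ z = 0, x_n = z_n = 1 and y_n = 0. Let s_0, ..., s_n be the sequence generated by x, y, z. Then y = ⌊(x+z)/k⌋ if and only if s_0, ..., s_n is Type 1. Moreover, when y = ⌊(x+z)/k⌋, for each j with 0 ≤ j < n the following hold: (a) if s_j ≤ 2m, then either (x_{n−j−1}, y_{n−j−1}, z_{n−j−1}) = (1,0,1) and s_{j+1} = P1(s_j), or (x_{n−j−1}, y_{n−j−1}, z_{n−j−1}) = (0,0,0) and s_{j+1} = P2(s_j); (b) if s_j ≥ 2m+2, then (x_{n−j−1}, y_{n−j−1}, z_{n−j−1}) = (1,1,0) or (0,1,1), and s_{j+1} = P3(s_j). -/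

import Mathlib

/-- P1(x) = 2x + 2 -/
def P1 (x : ℤ) : ℤ := 2 * x + 2
/-- P2(x) = 2x -/
def P2 (x : ℤ) : ℤ := 2 * x
/-- P3(x) = 2x + 1 - k -/
def P3 (k x : ℤ) : ℤ := 2 * x + 1 - k

/-- The i-th binary digit of x. -/
def bitd (x i : ℕ) : ℕ := x / 2 ^ i % 2

/-- The sequence generated by x, y, z :
s_j = Σ_{i=n−j}^{n} (x_i + z_i − k·y_i)·2^{i+j−n}. -/
def sgen (k : ℤ) (n : ℕ) (x y z : ℕ) (j : ℕ) : ℤ :=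
  ∑ i ∈ Finset.Icc (n - j) n,
    ((bitd x i : ℤ) + (bitd z i : ℤ) - k * (bitd y i : ℤ)) * 2 ^ (i + j - n)

lemma bitd_le_one (x i : ℕ) : bitd x i ≤ 1 := Nat.lt_succ_iff.mp (Nat.mod_lt _ (by norm_num))

lemma bitd_eq_toNat (x i : ℕ) : bitd x i = (x.testBit i).toNat := by
  rw [Nat.testBit_eq_decide_div_mod_eq]
  unfold bitd
  have : x / 2^i % 2 < 2 := Nat.mod_lt _ (by norm_num)
  interval_cases h : x / 2 ^ i % 2 <;> simp [h]

lemma bitd_xor (a b i : ℕ) : bitd (a ^^^ b) i = bitd a i ^^^ bitd b i := by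
  rw [bitd_eq_toNat, bitd_eq_toNat, bitd_eq_toNat, Nat.testBit_xor]
  cases a.testBit i <;> cases b.testBit i <;> rfl

lemma bitd_succ' (x i : ℕ) : bitd x (i+1) = bitd (x/2) i := by
  unfold bitd
  rw [Nat.div_div_eq_div_mul]
  ring_nf

lemma sum_bitd : ∀ (n x : ℕ), x < 2^(n+1) → ∑ i ∈ Finset.range (n+1), bitd x i * 2^i = x := by
  intro n
  induction n with
  | zero => intro x hx; simp [bitd]; omega
  | succ n ih =>
    intro x hx
    rw [Finset.sum_range_succ']
    have h1 : ∀ i, bitd x (i+1) * 2^(i+1) = (bitd (x/2) i * 2^i) * 2 := by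
      intro i; rw [bitd_succ']; ring
    rw [Finset.sum_congr rfl (fun i _ => h1 i), ← Finset.sum_mul,
      ih (x/2) (by omega)]
    have : bitd x 0 = x % 2 := by simp [bitd]
    rw [this]
    simp
    omega

lemma sgen_zero (k : ℤ) (n x y z : ℕ) :
    sgen k n x y z 0 = (bitd x n : ℤ) + (bitd z n : ℤ) - k * (bitd y n : ℤ) := by
  unfold sgen
  simp

lemma sgen_succ (k : ℤ) (n x y z j : ℕ) (hj : j < n) :
    sgen k n x y z (j+1) = 2 * sgen k n x y z j +
      ((bitd x (n-j-1) : ℤ) + (bitd z (n-j-1) : ℤ) - k * (bitd y (n-j-1) : ℤ)) := by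
  unfold sgen
  have hset : Finset.Icc (n - (j+1)) n = insert (n-j-1) (Finset.Icc (n-j) n) := by
    ext a; simp [Finset.mem_Icc, Finset.mem_insert]; omega
  rw [hset, Finset.sum_insert (by simp [Finset.mem_Icc]; omega)]
  have hexp0 : (n-j-1) + (j+1) - n = 0 := by omega
  rw [hexp0]
  have hcong : ∀ i ∈ Finset.Icc (n-j) n,
      ((bitd x i : ℤ) + (bitd z i : ℤ) - k * (bitd y i : ℤ)) * 2 ^ (i + (j+1) - n)
      = (((bitd x i : ℤ) + (bitd z i : ℤ) - k * (bitd y i : ℤ)) * 2 ^ (i + j - n)) * 2 := by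
    intro i hi
    simp only [Finset.mem_Icc] at hi
    have : i + (j+1) - n = (i + j - n) + 1 := by omega
    rw [this, pow_succ]; ring
  rw [Finset.sum_congr rfl hcong, ← Finset.sum_mul]
  ring

lemma sgen_last (k : ℤ) (n x y z : ℕ) (hx : x < 2^(n+1)) (hy : y < 2^(n+1)) (hz : z < 2^(n+1)) :
    sgen k n x y z n = (x : ℤ) + z - k * y := by
  unfold sgen
  have hicc : Finset.Icc (n - n) n = Finset.range (n+1) := by
    ext a; simp [Finset.mem_Icc, Finset.mem_range]
  rw [hicc]
  have hexp : ∀ i ∈ Finset.range (n+1),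
      ((bitd x i : ℤ) + (bitd z i : ℤ) - k * (bitd y i : ℤ)) * 2 ^ (i + n - n)
      = (bitd x i : ℤ) * 2^i + (bitd z i : ℤ) * 2^i - k * ((bitd y i : ℤ) * 2^i) := by
    intro i _
    have : i + n - n = i := by omega
    rw [this]; ring
  rw [Finset.sum_congr rfl hexp, Finset.sum_sub_distrib, Finset.sum_add_distrib, ← Finset.mul_sum]
  have cast_sum : ∀ w : ℕ, w < 2^(n+1) → ∑ i ∈ Finset.range (n+1), (bitd w i : ℤ) * 2^i = w := by
    intro w hw
    have := sum_bitd n w hw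
    calc ∑ i ∈ Finset.range (n+1), (bitd w i : ℤ) * 2^i
        = ((∑ i ∈ Finset.range (n+1), bitd w i * 2^i : ℕ) : ℤ) := by push_cast; rfl
      _ = w := by rw [this]
  rw [cast_sum x hx, cast_sum z hz, cast_sum y hy]

theorem stmt8 (m n k : ℕ) (hk : k = 4 * m + 3) (x y z : ℕ)
    (hx : x < 2 ^ (n + 1)) (hy : y < 2 ^ (n + 1)) (hz : z < 2 ^ (n + 1))
    (hxor : x ^^^ y ^^^ z = 0)
    (hxn : bitd x n = 1) (hzn : bitd z n = 1) (hyn : bitd y n = 0) :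
    (y = (x + z) / k ↔ ∀ j ≤ n, 0 ≤ sgen k n x y z j ∧ sgen k n x y z j < k) ∧
    (y = (x + z) / k →
      ∀ j < n,
        (sgen (k : ℤ) n x y z j ≤ 2 * m →
          ((bitd x (n - j - 1) = 1 ∧ bitd y (n - j - 1) = 0 ∧ bitd z (n - j - 1) = 1 ∧
              sgen k n x y z (j + 1) = P1 (sgen k n x y z j)) ∨
           (bitd x (n - j - 1) = 0 ∧ bitd y (n - j - 1) = 0 ∧ bitd z (n - j - 1) = 0 ∧
              sgen k n x y z (j + 1) = P2 (sgen k n x y z j)))) ∧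
        (2 * (m : ℤ) + 2 ≤ sgen k n x y z j →
          ((bitd x (n - j - 1) = 1 ∧ bitd y (n - j - 1) = 1 ∧ bitd z (n - j - 1) = 0) ∨
           (bitd x (n - j - 1) = 0 ∧ bitd y (n - j - 1) = 1 ∧ bitd z (n - j - 1) = 1)) ∧
          sgen k n x y z (j + 1) = P3 k (sgen k n x y z j))) := by
  set s : ℕ → ℤ := sgen (k : ℤ) n x y z with hs
  have hK : (k : ℤ) = 4 * m + 3 := by exact_mod_cast congrArg (Nat.cast : ℕ → ℤ) hk
  -- digit triple classification
  have trip : ∀ i, (bitd y i = 0 ∧ bitd x i = bitd z i) ∨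
      (bitd y i = 1 ∧ bitd x i + bitd z i = 1) := by
    intro i
    have hxy : x ^^^ y = z := by
      have := congrArg (· ^^^ z) hxor; simpa [Nat.xor_assoc] using this
    have hzi : bitd z i = bitd x i ^^^ bitd y i := by rw [← hxy, bitd_xor]
    have hx1 := bitd_le_one x i
    have hy1 := bitd_le_one y i
    rcases Nat.le_one_iff_eq_zero_or_eq_one.mp hx1 with h1 | h1 <;>
      rcases Nat.le_one_iff_eq_zero_or_eq_one.mp hy1 with h2 | h2 <;>
      simp [h1, h2] at hzi ⊢ <;> omega
  have hs0 : s 0 = 2 := by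
    rw [hs, sgen_zero, hxn, hzn, hyn]; norm_num
  -- one-step state evolution
  have hstep : ∀ j < n, s (j+1) = 2 * s j +
      ((bitd x (n-j-1) : ℤ) + (bitd z (n-j-1) : ℤ) - k * (bitd y (n-j-1) : ℤ)) :=
    fun j hj => sgen_succ (k : ℤ) n x y z j hj
  -- invariant : in range or far out of range
  have hstate : ∀ j, j ≤ n → (0 ≤ s j ∧ s j < k) ∨ (s j ≤ -2 ∨ (k : ℤ) ≤ s j) := by
    intro j
    induction j with
    | zero => intro _; left; rw [hs0]; constructor <;> omega
    | succ j ih =>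
      intro hj
      have hjn : j < n := by omega
      have hst := hstep j hjn
      have hxle := bitd_le_one x (n-j-1)
      have hzle := bitd_le_one z (n-j-1)
      rcases trip (n-j-1) with ⟨hy0, hxz⟩ | ⟨hy1, hxz⟩ <;>
        rcases ih (by omega) with h | h
      · rw [hy0] at hst
        push_cast at hst
        by_cases hlt : s (j+1) < (k:ℤ)
        · left; constructor
          · omega
          · exact hlt
        · right; right; omega
      · right; rw [hy0] at hst; push_cast at hst; omega
      · rw [hy1] at hst
        push_cast at hst
        have hsum : (bitd x (n-j-1) : ℤ) + (bitd z (n-j-1) : ℤ) = 1 := by exact_mod_cast hxz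
        -- s(j+1) = 2 s j + 1 - k, which is even since k = 4m+3
        by_cases hge : 0 ≤ s (j+1)
        · left; omega
        · right; left; omega
      · right; rw [hy1] at hst; push_cast at hst
        have hsum : (bitd x (n-j-1) : ℤ) + (bitd z (n-j-1) : ℤ) = 1 := by exact_mod_cast hxz
        omega
  -- escape: once far out of range, stays out
  have hescape : ∀ d j, j + d ≤ n → (s j ≤ -2 ∨ (k : ℤ) ≤ s j) →
      (s (j + d) ≤ -2 ∨ (k : ℤ) ≤ s (j + d)) := by
    intro d
    induction d with
    | zero => intro j _ h; exact h
    | succ d ih =>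
      intro j hj hout
      have hjn : j < n := by omega
      have hst := hstep j hjn
      have hxle := bitd_le_one x (n-j-1)
      have hzle := bitd_le_one z (n-j-1)
      have hout1 : s (j+1) ≤ -2 ∨ (k : ℤ) ≤ s (j+1) := by
        rcases trip (n-j-1) with ⟨hy0, hxz⟩ | ⟨hy1, hxz⟩
        · rw [hy0] at hst; push_cast at hst; omega
        · rw [hy1] at hst; push_cast at hst
          have hsum : (bitd x (n-j-1) : ℤ) + (bitd z (n-j-1) : ℤ) = 1 := by exact_mod_cast hxz
          omega
      have := ih (j+1) (by omega) hout1
      have heq : j + (d+1) = (j+1) + d := by omega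
      rw [heq]
      exact this
  have hsn : s n = (x : ℤ) + z - k * y := sgen_last (k : ℤ) n x y z hx hy hz
  -- the iff
  have hiff : y = (x + z) / k ↔ ∀ j ≤ n, 0 ≤ s j ∧ s j < k := by
    constructor
    · intro h j hj
      -- y = (x+z)/k gives s n in range
      have h0 : 0 < k := by omega
      have hd := Nat.div_add_mod (x+z) k
      have hm := Nat.mod_lt (x+z) h0
      have A : k * y ≤ x + z := by rw [h]; exact Nat.mul_div_le _ _
      have B : x + z < k * y + k := by rw [h]; linarith
      have A' : (k:ℤ) * y ≤ (x:ℤ) + z := by exact_mod_cast A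
      have B' : (x:ℤ) + z < (k:ℤ) * y + k := by exact_mod_cast B
      have hsnr : 0 ≤ s n ∧ s n < k := by rw [hsn]; omega
      rcases hstate j hj with h' | h'
      · exact h'
      · exfalso
        have := hescape (n - j) j (by omega) h'
        have heq : j + (n - j) = n := by omega
        rw [heq] at this
        omega
    · intro h
      have hsnr := h n le_rfl
      rw [hsn] at hsnr
      have A : k * y ≤ x + z := by exact_mod_cast (by omega : (k:ℤ) * y ≤ (x:ℤ) + z)
      have B : x + z < k * y + k := by exact_mod_cast (by omega : (x:ℤ) + z < (k:ℤ) * y + k)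
      refine (Nat.div_eq_of_lt_le (by linarith) ?_).symm
      calc x + z < k * y + k := B
        _ = (y+1) * k := by ring
  refine ⟨hiff, ?_⟩
  intro h j hj
  have hall := hiff.mp h
  have h1 := hall j (le_of_lt hj)
  have h2 := hall (j+1) hj
  have hst := hstep j hj
  have hxle := bitd_le_one x (n-j-1)
  have hzle := bitd_le_one z (n-j-1)
  constructor
  · intro hle
    rcases trip (n-j-1) with ⟨hy0, hxz⟩ | ⟨hy1, hxz⟩
    · rw [hy0] at hst; push_cast at hst
      rcases Nat.le_one_iff_eq_zero_or_eq_one.mp hxle with hb | hb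
      · right
        refine ⟨hb, hy0, by omega, ?_⟩
        have hbz : bitd z (n-j-1) = 0 := by omega
        rw [hb] at hst
        rw [hbz] at hst
        push_cast at hst
        rw [P2]
        omega
      · left
        refine ⟨hb, hy0, by omega, ?_⟩
        have hbz : bitd z (n-j-1) = 1 := by omega
        rw [hb, hbz] at hst
        push_cast at hst
        rw [P1]
        omega
    · exfalso
      rw [hy1] at hst; push_cast at hst
      have hsum : (bitd x (n-j-1) : ℤ) + (bitd z (n-j-1) : ℤ) = 1 := by exact_mod_cast hxz
      omega
  · intro hge
    rcases trip (n-j-1) with ⟨hy0, hxz⟩ | ⟨hy1, hxz⟩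
    · exfalso
      rw [hy0] at hst; push_cast at hst
      have hxz' : (bitd x (n-j-1) : ℤ) = (bitd z (n-j-1) : ℤ) := by exact_mod_cast hxz
      omega
    · have hsum : (bitd x (n-j-1) : ℤ) + (bitd z (n-j-1) : ℤ) = 1 := by exact_mod_cast hxz
      constructor
      · rcases Nat.le_one_iff_eq_zero_or_eq_one.mp hxle with hb | hb
        · right; exact ⟨hb, hy1, by omega⟩
        · left; exact ⟨hb, hy1, by omega⟩
      · rw [hy1] at hst; push_cast at hst
        rw [P3]
        omega
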